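/- arXiv:1409.7681 — 5 statements merged into one kernel-verified Lean document; each statement's English description precedes it below -/
import Mathlib

section
/- Let a, b, c be positive reals satisfying the strict triangle inequalities, and let t > 0. Then the three positive reals a, √(b² + t), √(c² + t) also satisfy the strict triangle inequalities; that is, a euclidean triangle with these side lengths exists. -/
/-- If positive reals `a, b, c` satisfy the strict triangle inequalities and `t > 0`,
then `a, √(b² + t), √(c² + t)` also satisfy the strict triangle inequalities. -/
theorem deformed_triangle_exists (a b c t : ℝ) (ha : 0 < a) (hb : 0 < b) (hc : 0 < c)
    (h1 : a < b + c) (h2 : b < a + c) (h3 : c < a + b) (ht : 0 < t) :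
    a < Real.sqrt (b ^ 2 + t) + Real.sqrt (c ^ 2 + t) ∧
      Real.sqrt (b ^ 2 + t) < a + Real.sqrt (c ^ 2 + t) ∧
        Real.sqrt (c ^ 2 + t) < a + Real.sqrt (b ^ 2 + t) := by
  have hbt : (0:ℝ) ≤ b ^ 2 + t := by positivity
  have hct : (0:ℝ) ≤ c ^ 2 + t := by positivity
  have hbs : b < Real.sqrt (b ^ 2 + t) := by
    rw [Real.lt_sqrt hb.le]; linarith
  have hcs : c < Real.sqrt (c ^ 2 + t) := by
    rw [Real.lt_sqrt hc.le]; linarith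
  have hbsq : Real.sqrt (b ^ 2 + t) ^ 2 = b ^ 2 + t := Real.sq_sqrt hbt
  have hcsq : Real.sqrt (c ^ 2 + t) ^ 2 = c ^ 2 + t := Real.sq_sqrt hct
  refine ⟨by linarith, ?_, ?_⟩
  · rw [Real.sqrt_lt' (by positivity)]
    nlinarith [Real.sqrt_nonneg (c ^ 2 + t)]
  · rw [Real.sqrt_lt' (by positivity)]
    nlinarith [Real.sqrt_nonneg (b ^ 2 + t)]
end

section
/- For b ≥ 0 and t ∈ ℝ, write b_t for the unique nonnegative real with cosh b_t = eᵗ · cosh b. Then for every t > 0 and all reals b > c ≥ 0, one has b_t − c_t < b − c. -/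
/-- If `b_t, c_t` are the unique nonnegative reals with `cosh b_t = eᵗ · cosh b`
and `cosh c_t = eᵗ · cosh c`, then for `t > 0` and `b > c ≥ 0` one has
`b_t − c_t < b − c`. -/
theorem hyperbolic_deform_contraction (b c t : ℝ) (hc : 0 ≤ c) (hcb : c < b) (ht : 0 < t)
    (bt ct : ℝ) (hbt0 : 0 ≤ bt) (hct0 : 0 ≤ ct)
    (hbt : Real.cosh bt = Real.exp t * Real.cosh b)
    (hct : Real.cosh ct = Real.exp t * Real.cosh c) :
    bt - ct < b - c := by
  have het : 1 < Real.exp t := Real.one_lt_exp_iff.mpr ht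
  -- sinh ct > e^t * sinh c
  have hsinh : Real.exp t * Real.sinh c < Real.sinh ct := by
    have h1 : (Real.exp t * Real.sinh c) ^ 2 < Real.sinh ct ^ 2 := by
      have hc2 : Real.sinh ct ^ 2 = Real.cosh ct ^ 2 - 1 := by
        have := Real.cosh_sq ct; linarith
      have hc1 : Real.sinh c ^ 2 = Real.cosh c ^ 2 - 1 := by
        have := Real.cosh_sq c; linarith
      have he2 : 1 < Real.exp t ^ 2 := by nlinarith
      rw [hc2, hct, mul_pow, hc1]
      nlinarith
    have h2 : 0 ≤ Real.sinh ct := Real.sinh_nonneg_iff.mpr hct0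
    have h3 : 0 ≤ Real.sinh c := Real.sinh_nonneg_iff.mpr hc
    nlinarith [mul_pos (Real.exp_pos t) (Real.exp_pos t)]
  -- cosh bt < cosh (ct + (b - c))
  have key : Real.cosh bt < Real.cosh (ct + (b - c)) := by
    have hcb' : Real.cosh b =
        Real.cosh c * Real.cosh (b - c) + Real.sinh c * Real.sinh (b - c) := by
      rw [← Real.cosh_add]; ring_nf
    have hs : 0 < Real.sinh (b - c) := Real.sinh_pos_iff.mpr (by linarith)
    have h5 := mul_lt_mul_of_pos_right hsinh hs
    rw [Real.cosh_add, hbt, hcb', hct]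
    nlinarith
  rw [Real.cosh_lt_cosh] at key
  have h4 : 0 ≤ ct + (b - c) := by linarith
  rw [abs_of_nonneg hbt0, abs_of_nonneg h4] at key
  linarith
end

section
/- For b ≥ 0 and t ∈ ℝ, write b_t for the unique nonnegative real with cosh b_t = eᵗ · cosh b. Let a, b, c be positive reals satisfying the strict triangle inequalities and let t > 0. Then the three positive reals a, b_t, c_t also satisfy the strict triangle inequalities; that is, a hyperbolic triangle with these side lengths exists. -/
open Real

lemma sinh_deform_aux (x t xt : ℝ) (hx : 0 ≤ x) (ht : 0 ≤ t) (hxt : 0 ≤ xt)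
    (h : Real.cosh xt = Real.exp t * Real.cosh x) :
    Real.exp t * Real.sinh x ≤ Real.sinh xt := by
  have h1 : Real.sinh xt ^ 2 = Real.cosh xt ^ 2 - 1 := Real.sinh_sq xt
  have h2 : Real.sinh x ^ 2 = Real.cosh x ^ 2 - 1 := Real.sinh_sq x
  have he : 1 ≤ Real.exp t := Real.one_le_exp ht
  have hsx : 0 ≤ Real.sinh x := Real.sinh_nonneg_iff.mpr hx
  have hsxt : 0 ≤ Real.sinh xt := Real.sinh_nonneg_iff.mpr hxt
  have hp : 0 ≤ Real.exp t * Real.sinh x := by positivity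
  apply le_of_pow_le_pow_left₀ two_ne_zero hsxt
  rw [h] at h1
  have hE2 : 1 ≤ Real.exp t * Real.exp t := by nlinarith
  nlinarith [h1, h2, hE2]

lemma pos_deform (x t xt : ℝ) (hx : 0 < x) (ht : 0 < t) (hxt : 0 ≤ xt)
    (h : Real.cosh xt = Real.exp t * Real.cosh x) : 0 < xt := by
  have h1 : 1 < Real.cosh xt := by
    rw [h]
    have := Real.one_le_cosh x
    nlinarith [Real.one_lt_exp_iff.mpr ht]
  rcases lt_or_eq_of_le hxt with h' | h'
  · exact h'
  · simp [← h'] at h1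

/-- If positive reals `a, b, c` satisfy the strict triangle inequalities, `t > 0`, and
`b_t, c_t` are the unique nonnegative reals with `cosh b_t = eᵗ · cosh b`,
`cosh c_t = eᵗ · cosh c`, then the positive reals `a, b_t, c_t` also satisfy the
strict triangle inequalities. -/
theorem hyperbolic_deformed_triangle_exists (a b c t : ℝ)
    (ha : 0 < a) (hb : 0 < b) (hc : 0 < c)
    (h1 : a < b + c) (h2 : b < a + c) (h3 : c < a + b) (ht : 0 < t)
    (bt ct : ℝ) (hbt0 : 0 ≤ bt) (hct0 : 0 ≤ ct)
    (hbt : Real.cosh bt = Real.exp t * Real.cosh b)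
    (hct : Real.cosh ct = Real.exp t * Real.cosh c) :
    0 < bt ∧ 0 < ct ∧ a < bt + ct ∧ bt < a + ct ∧ ct < a + bt := by
  have he : 1 ≤ Real.exp t := Real.one_le_exp ht.le
  have hsb := sinh_deform_aux b t bt hb.le ht.le hbt0 hbt
  have hsc := sinh_deform_aux c t ct hc.le ht.le hct0 hct
  have hsa : 0 ≤ Real.sinh a := Real.sinh_nonneg_iff.mpr ha.le
  have hsb' : 0 ≤ Real.sinh b := Real.sinh_nonneg_iff.mpr hb.le
  have hsc' : 0 ≤ Real.sinh c := Real.sinh_nonneg_iff.mpr hc.le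
  have hca : 1 ≤ Real.cosh a := Real.one_le_cosh a
  have hcb : 1 ≤ Real.cosh b := Real.one_le_cosh b
  have hcc : 1 ≤ Real.cosh c := Real.one_le_cosh c
  refine ⟨pos_deform b t bt hb ht hbt0 hbt, pos_deform c t ct hc ht hct0 hct, ?_, ?_, ?_⟩
  · -- a < bt + ct
    have key : Real.cosh a < Real.cosh (bt + ct) := by
      have hlt : Real.cosh a < Real.cosh (b + c) := by
        rw [Real.cosh_lt_cosh, abs_of_nonneg ha.le, abs_of_nonneg (by linarith)]
        exact h1
      rw [Real.cosh_add] at hlt ⊢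
      have hE2 : 1 ≤ Real.exp t * Real.exp t := by nlinarith
      have hP : (Real.exp t * Real.sinh b) * (Real.exp t * Real.sinh c)
          ≤ Real.sinh bt * Real.sinh ct :=
        mul_le_mul hsb hsc (by positivity) (le_trans (by positivity) hsb)
      have hQ : Real.cosh b * Real.cosh c
          ≤ Real.cosh bt * Real.cosh ct := by
        rw [hbt, hct]
        nlinarith [mul_pos (lt_of_lt_of_le one_pos hcb) (lt_of_lt_of_le one_pos hcc)]
      nlinarith [mul_nonneg hsb' hsc', hE2, hP, hQ, hlt]
    rw [Real.cosh_lt_cosh, abs_of_nonneg ha.le, abs_of_nonneg (by linarith)] at key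
    exact key
  · -- bt < a + ct
    have key : Real.cosh bt < Real.cosh (a + ct) := by
      have hlt : Real.cosh b < Real.cosh (a + c) := by
        rw [Real.cosh_lt_cosh, abs_of_nonneg hb.le, abs_of_nonneg (by linarith)]
        exact h2
      rw [Real.cosh_add] at hlt ⊢
      rw [hbt]
      have hP : Real.sinh a * (Real.exp t * Real.sinh c)
          ≤ Real.sinh a * Real.sinh ct := by nlinarith
      rw [hct]
      nlinarith
    rw [Real.cosh_lt_cosh, abs_of_nonneg hbt0, abs_of_nonneg (by linarith)] at key
    exact key
  · -- ct < a + bt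
    have key : Real.cosh ct < Real.cosh (a + bt) := by
      have hlt : Real.cosh c < Real.cosh (a + b) := by
        rw [Real.cosh_lt_cosh, abs_of_nonneg hc.le, abs_of_nonneg (by linarith)]
        exact h3
      rw [Real.cosh_add] at hlt ⊢
      rw [hct]
      have hP : Real.sinh a * (Real.exp t * Real.sinh b)
          ≤ Real.sinh a * Real.sinh bt := by nlinarith
      rw [hbt]
      nlinarith
    rw [Real.cosh_lt_cosh, abs_of_nonneg hct0, abs_of_nonneg (by linarith)] at key
    exact key
end

section
/- Let a, b, c be positive reals satisfying the strict triangle inequalities. For t ≥ 0 write b_t, c_t for the unique nonnegative reals with cosh b_t = eᵗ · cosh b and cosh c_t = eᵗ · cosh c. Then arccos((cosh b_t · cosh c_t − cosh a) / (sinh b_t · sinh c_t)) tends to 0 as t → +∞. -/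
/-- Let `a, b, c` be positive reals satisfying the strict triangle inequalities, and
for `t ≥ 0` let `b_t, c_t` be the unique nonnegative reals with
`cosh b_t = eᵗ · cosh b`, `cosh c_t = eᵗ · cosh c`. Then the angle
`arccos((cosh b_t · cosh c_t − cosh a) / (sinh b_t · sinh c_t))` of the hyperbolic
triangle with sides `a, b_t, c_t` opposite to `a` tends to `0` as `t → +∞`. -/
theorem hyperbolic_deformed_angle_tendsto_zero (a b c : ℝ)
    (ha : 0 < a) (hb : 0 < b) (hc : 0 < c)
    (h1 : a < b + c) (h2 : b < a + c) (h3 : c < a + b)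
    (bt ct : ℝ → ℝ)
    (hbt : ∀ t, 0 ≤ t → 0 ≤ bt t ∧ Real.cosh (bt t) = Real.exp t * Real.cosh b)
    (hct : ∀ t, 0 ≤ t → 0 ≤ ct t ∧ Real.cosh (ct t) = Real.exp t * Real.cosh c) :
    Filter.Tendsto
      (fun t : ℝ => Real.arccos
        ((Real.cosh (bt t) * Real.cosh (ct t) - Real.cosh a) /
          (Real.sinh (bt t) * Real.sinh (ct t))))
      Filter.atTop (nhds 0) := by
  open Real Filter in
  set A := Real.cosh a with hA
  set B := Real.cosh b with hB
  set C := Real.cosh c with hC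
  have hB1 : 1 < B := by
    rw [hB]; exact Real.one_lt_cosh.mpr hb.ne'
  have hC1 : 1 < C := by
    rw [hC]; exact Real.one_lt_cosh.mpr hc.ne'
  have hBpos : 0 < B := lt_trans one_pos hB1
  have hCpos : 0 < C := lt_trans one_pos hC1
  -- the auxiliary function of u = exp (-(2t))
  set g : ℝ → ℝ := fun u =>
    (B * C - A * u) / (Real.sqrt (B ^ 2 - u) * Real.sqrt (C ^ 2 - u)) with hg
  have hg0 : g 0 = 1 := by
    simp only [hg, mul_zero, sub_zero]
    rw [Real.sqrt_sq hBpos.le, Real.sqrt_sq hCpos.le]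
    field_simp
  have hgcont : ContinuousAt g 0 := by
    apply ContinuousAt.div
    · fun_prop
    · fun_prop
    · rw [sub_zero, sub_zero, Real.sqrt_sq hBpos.le, Real.sqrt_sq hCpos.le]
      positivity
  have h0 : Tendsto (fun t : ℝ => Real.exp (-(2 * t))) atTop (nhds 0) := by
    exact Real.tendsto_exp_neg_atTop_nhds_zero.comp (tendsto_id.const_mul_atTop two_pos)
  have hgt : Tendsto (fun t : ℝ => g (Real.exp (-(2 * t)))) atTop (nhds 1) := by
    rw [← hg0]
    exact hgcont.tendsto.comp h0
  -- the ratio equals g (exp (-(2t))) for t ≥ 0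
  have heq : ∀ᶠ t in atTop,
      (Real.cosh (bt t) * Real.cosh (ct t) - Real.cosh a) /
        (Real.sinh (bt t) * Real.sinh (ct t)) = g (Real.exp (-(2 * t))) := by
    filter_upwards [eventually_ge_atTop (0 : ℝ)] with t ht
    obtain ⟨hb0, hbe⟩ := hbt t ht
    obtain ⟨hc0, hce⟩ := hct t ht
    have hexp2 : Real.exp t ^ 2 = Real.exp (2 * t) := by
      rw [sq, ← Real.exp_add]; ring_nf
    have hexp1 : Real.exp (2 * t) * Real.exp (-(2 * t)) = 1 := by
      rw [← Real.exp_add]; simp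
    set u := Real.exp (-(2 * t)) with hu
    have hupos : 0 < u := Real.exp_pos _
    have hule : u ≤ 1 := Real.exp_le_one_iff.mpr (by linarith)
    have hBu : 0 < B ^ 2 - u := by nlinarith
    have hCu : 0 < C ^ 2 - u := by nlinarith
    have hsinhb : Real.sinh (bt t) = Real.exp t * Real.sqrt (B ^ 2 - u) := by
      have h1 : Real.sinh (bt t) = Real.sqrt (Real.cosh (bt t) ^ 2 - 1) := by
        rw [show Real.cosh (bt t) ^ 2 - 1 = Real.sinh (bt t) ^ 2 by
          rw [Real.cosh_sq]; ring]
        exact (Real.sqrt_sq (Real.sinh_nonneg_iff.mpr hb0)).symm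
      rw [h1, hbe]
      rw [show (Real.exp t * B) ^ 2 - 1 = Real.exp t ^ 2 * (B ^ 2 - u) by
        rw [mul_sub, hexp2, hexp1, mul_pow, hexp2]]
      rw [Real.sqrt_mul (sq_nonneg _), Real.sqrt_sq (Real.exp_pos t).le]
    have hsinhc : Real.sinh (ct t) = Real.exp t * Real.sqrt (C ^ 2 - u) := by
      have h1 : Real.sinh (ct t) = Real.sqrt (Real.cosh (ct t) ^ 2 - 1) := by
        rw [show Real.cosh (ct t) ^ 2 - 1 = Real.sinh (ct t) ^ 2 by
          rw [Real.cosh_sq]; ring]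
        exact (Real.sqrt_sq (Real.sinh_nonneg_iff.mpr hc0)).symm
      rw [h1, hce]
      rw [show (Real.exp t * C) ^ 2 - 1 = Real.exp t ^ 2 * (C ^ 2 - u) by
        rw [mul_sub, hexp2, hexp1, mul_pow, hexp2]]
      rw [Real.sqrt_mul (sq_nonneg _), Real.sqrt_sq (Real.exp_pos t).le]
    rw [hbe, hce, hsinhb, hsinhc, hg]
    have hsb : 0 < Real.sqrt (B ^ 2 - u) := Real.sqrt_pos.mpr hBu
    have hsc : 0 < Real.sqrt (C ^ 2 - u) := Real.sqrt_pos.mpr hCu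
    rw [div_eq_div_iff (by positivity) (by positivity)]
    have : Real.exp t * B * (Real.exp t * C) = Real.exp (2 * t) * (B * C) := by
      rw [← hexp2]; ring
    rw [this]
    have hAu : A = Real.exp (2 * t) * (A * u) := by
      rw [hu, mul_comm A, ← mul_assoc, hexp1, one_mul]
    calc (Real.exp (2 * t) * (B * C) - A) * (Real.sqrt (B ^ 2 - u) * Real.sqrt (C ^ 2 - u))
        = (Real.exp (2 * t) * (B * C) - Real.exp (2 * t) * (A * u)) *
            (Real.sqrt (B ^ 2 - u) * Real.sqrt (C ^ 2 - u)) := by rw [← hAu]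
      _ = (B * C - A * u) *
            (Real.exp t * Real.sqrt (B ^ 2 - u) * (Real.exp t * Real.sqrt (C ^ 2 - u))) := by
          rw [← hexp2]; ring
  have hratio : Filter.Tendsto
      (fun t : ℝ => (Real.cosh (bt t) * Real.cosh (ct t) - Real.cosh a) /
        (Real.sinh (bt t) * Real.sinh (ct t))) atTop (nhds 1) :=
    hgt.congr' (heq.mono fun t h => h.symm)
  have := (Real.continuous_arccos.continuousAt (x := (1 : ℝ))).tendsto.comp hratio
  rw [Real.arccos_one] at this
  exact this
end

section
/- Let a, b, c be positive reals satisfying the strict triangle inequalities, and for x, y, z satisfying the strict triangle inequalities let α(x; y, z) := arccos((cosh y · cosh z − cosh x)/(sinh y · sinh z)) denote the angle opposite the side x of the hyperbolic triangle with sides x, y, z. For t > 0 write b_t, c_t for the unique nonnegative reals with cosh b_t = eᵗ · cosh b, cosh c_t = eᵗ · cosh c. Then α(a; b_t, c_t) + α(b_t; c_t, a) + α(c_t; a, b_t) < α(a; b, c) + α(b; c, a) + α(c; a, b); equivalently, the angle defect π − (sum of angles), which equals the hyperbolic area, is strictly larger for the deformed triangle. -/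
set_option maxHeartbeats 1600000


/-- The angle of the hyperbolic triangle with side lengths `x, y, z` opposite to the
side `x`, by the hyperbolic law of cosines. -/
noncomputable def hypAngle (x y z : ℝ) : ℝ :=
  Real.arccos ((Real.cosh y * Real.cosh z - Real.cosh x) / (Real.sinh y * Real.sinh z))

private lemma aux_sum_lt_pi {p q r : ℝ}
    (hp0 : 0 ≤ p) (hpπ : p ≤ Real.pi) (hq0 : 0 ≤ q) (hqπ : q ≤ Real.pi)
    (hr0 : 0 ≤ r) (hrπ : r ≤ Real.pi)
    (h1 : 0 < Real.cos q + Real.cos r)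
    (h2 : 0 < Real.cos p + Real.cos (q + r)) : p + q + r < Real.pi := by
  have hπ := Real.pi_pos
  have hqr : q + r < Real.pi := by
    by_contra hcon
    push_neg at hcon
    have h3 : Real.pi - r ≤ q := by linarith
    have h4 : Real.cos q ≤ Real.cos (Real.pi - r) :=
      Real.strictAntiOn_cos.antitoneOn ⟨by linarith, by linarith⟩ ⟨hq0, hqπ⟩ h3
    rw [Real.cos_pi_sub] at h4
    linarith
  by_contra hcon
  push_neg at hcon
  have h3 : Real.pi - (q + r) ≤ p := by linarith
  have h4 : Real.cos p ≤ Real.cos (Real.pi - (q + r)) :=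
    Real.strictAntiOn_cos.antitoneOn ⟨by linarith, by linarith⟩ ⟨hp0, hpπ⟩ h3
  rw [Real.cos_pi_sub] at h4
  linarith

private lemma arccos_facts (n d sd : ℝ) (hd : 0 < d) (hsd : 0 < sd)
    (h : n ^ 2 + sd ^ 2 = d ^ 2) :
    Real.cos (Real.arccos (n / d)) = n / d ∧
    Real.sin (Real.arccos (n / d)) = sd / d ∧
    0 < Real.arccos (n / d) ∧ Real.arccos (n / d) < Real.pi := by
  have habs : |n| < d := by
    apply lt_of_pow_lt_pow_left₀ 2 hd.le
    rw [sq_abs]; nlinarith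
  rw [abs_lt] at habs
  have hlt1 : n / d < 1 := by rw [div_lt_one hd]; linarith
  have hgt1 : -1 < n / d := by rw [lt_div_iff₀ hd]; linarith
  have hltpi : Real.arccos (n / d) < Real.pi := by
    rw [Real.arccos]
    have := Real.neg_pi_div_two_lt_arcsin.mpr hgt1
    linarith [Real.pi_pos]
  refine ⟨Real.cos_arccos hgt1.le hlt1.le, ?_, Real.arccos_pos.mpr hlt1, hltpi⟩
  rw [Real.sin_arccos]
  have h1 : 1 - (n / d) ^ 2 = (sd / d) ^ 2 := by
    field_simp
    linarith
  rw [h1, Real.sqrt_sq (div_nonneg hsd.le hd.le)]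

private lemma pair_identity (A B C sx sy sz sd : ℝ)
    (hsx : sx ^ 2 = A ^ 2 - 1)
    (hsd : sd ^ 2 = 1 + 2 * A * B * C - A ^ 2 - B ^ 2 - C ^ 2)
    (hx : sx ≠ 0) (hy : sy ≠ 0) (hz : sz ≠ 0) :
    (B * C - A) / (sy * sz) +
      ((C * A - B) / (sz * sx) * ((A * B - C) / (sx * sy)) -
        sd / (sz * sx) * (sd / (sx * sy)))
      = (A - 1) * (1 + 2 * A * B * C - A ^ 2 - B ^ 2 - C ^ 2) / (sx ^ 2 * (sy * sz)) := by
  have h1 : (B * C - A) / (sy * sz) +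
      ((C * A - B) / (sz * sx) * ((A * B - C) / (sx * sy)) -
        sd / (sz * sx) * (sd / (sx * sy)))
      = ((B * C - A) * sx ^ 2 + ((C * A - B) * (A * B - C) - sd ^ 2)) /
          (sx ^ 2 * (sy * sz)) := by
    field_simp
  rw [h1, hsx, hsd]
  congr 1
  ring

private lemma cosS_identity (A B C sx sy sz sd : ℝ)
    (hsx : sx ^ 2 = A ^ 2 - 1) (hsy : sy ^ 2 = B ^ 2 - 1) (hsz : sz ^ 2 = C ^ 2 - 1)
    (hsd : sd ^ 2 = 1 + 2 * A * B * C - A ^ 2 - B ^ 2 - C ^ 2)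
    (hA : 1 < A) (hB : 1 < B) (hC : 1 < C)
    (hx : sx ≠ 0) (hy : sy ≠ 0) (hz : sz ≠ 0) :
    (B * C - A) / (sy * sz) *
        ((C * A - B) / (sz * sx) * ((A * B - C) / (sx * sy)) -
          sd / (sz * sx) * (sd / (sx * sy))) -
      sd / (sy * sz) *
        (sd / (sz * sx) * ((A * B - C) / (sx * sy)) +
          (C * A - B) / (sz * sx) * (sd / (sx * sy)))
      = 1 - (1 + A + B + C) ^ 2 / ((1 + A) * ((1 + B) * (1 + C))) := by
  have h1 : (B * C - A) / (sy * sz) *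
        ((C * A - B) / (sz * sx) * ((A * B - C) / (sx * sy)) -
          sd / (sz * sx) * (sd / (sx * sy))) -
      sd / (sy * sz) *
        (sd / (sz * sx) * ((A * B - C) / (sx * sy)) +
          (C * A - B) / (sz * sx) * (sd / (sx * sy)))
      = ((B * C - A) * ((C * A - B) * (A * B - C) - sd ^ 2) -
          sd ^ 2 * ((A * B - C) + (C * A - B))) / (sx ^ 2 * sy ^ 2 * sz ^ 2) := by
    field_simp
  rw [h1, hsd, hsx, hsy, hsz]
  have e1 : A ^ 2 - 1 ≠ 0 := by nlinarith
  have e2 : B ^ 2 - 1 ≠ 0 := by nlinarith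
  have e3 : C ^ 2 - 1 ≠ 0 := by nlinarith
  have e4 : (1 + A) ≠ 0 := by nlinarith
  have e5 : (1 + B) ≠ 0 := by nlinarith
  have e6 : (1 + C) ≠ 0 := by nlinarith
  field_simp
  ring

private lemma final_ineq (A B C u : ℝ) (hA : 1 < A) (hB : 1 < B) (hC : 1 < C)
    (hu : 1 < u) (h : B ^ 2 + C ^ 2 < 2 * A * B * C) :
    (1 + A + u * B + u * C) ^ 2 / ((1 + A) * ((1 + u * B) * (1 + u * C))) <
      (1 + A + B + C) ^ 2 / ((1 + A) * ((1 + B) * (1 + C))) := by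
  have hden1 : 0 < (1 + A) * ((1 + u * B) * (1 + u * C)) := by
    have hub : 0 < 1 + u * B := by nlinarith
    have huc : 0 < 1 + u * C := by nlinarith
    exact mul_pos (by linarith) (mul_pos hub huc)
  have hden2 : 0 < (1 + A) * ((1 + B) * (1 + C)) := by
    exact mul_pos (by linarith) (mul_pos (by linarith) (by linarith))
  have h' : 0 < 2 * (1 + A) * B * C - (B + C) ^ 2 := by nlinarith
  obtain ⟨αe, hαdef⟩ : ∃ x : ℝ,
      x = B * C * (1 + A) ^ 2 + 2 * (1 + A) * (B + C) * B * C - (B + C) ^ 3 - (B + C) ^ 2 :=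
    ⟨_, rfl⟩
  obtain ⟨γe, hγdef⟩ : ∃ x : ℝ,
      x = (1 + A + B + C) ^ 2 - (1 + A) ^ 2 * ((1 + B) * (1 + C)) := ⟨_, rfl⟩
  have t1 : 0 < (1 + A) * (2 * (1 + A) * B * C - (B + C) ^ 2) :=
    mul_pos (by linarith) h'
  have t2 : 0 < (B + C) * (2 * (1 + A) * B * C - (B + C) ^ 2) :=
    mul_pos (by linarith) h'
  have t3 : 0 ≤ (B + C) ^ 2 * (A - 1) := mul_nonneg (sq_nonneg _) (by linarith)
  have hαe : 0 < αe := by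
    have hident : 2 * αe = (1 + A) * (2 * (1 + A) * B * C - (B + C) ^ 2) +
        2 * ((B + C) * (2 * (1 + A) * B * C - (B + C) ^ 2)) + (B + C) ^ 2 * (A - 1) := by
      rw [hαdef]; ring
    linarith
  have t4 : 0 < (1 + A + B + C) * (2 * (1 + A) * B * C - (B + C) ^ 2) :=
    mul_pos (by linarith) h'
  have t5 : 0 < (1 + A + B + C) * ((B + C) * (A - 1)) :=
    mul_pos (by linarith) (mul_pos (by linarith) (by linarith))
  have hαγ : 0 < αe - γe := by
    have hident : αe - γe = (1 + A + B + C) * (2 * (1 + A) * B * C - (B + C) ^ 2) +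
        (1 + A + B + C) * ((B + C) * (A - 1)) := by
      rw [hαdef, hγdef]; ring
    linarith
  have hlin : 0 < αe * u - γe := by
    have t6 : 0 < αe * (u - 1) := mul_pos hαe (by linarith)
    have hident : αe * u - γe = αe * (u - 1) + (αe - γe) := by ring
    linarith
  have hP : 0 < (u - 1) * (αe * u - γe) := mul_pos (by linarith) hlin
  rw [div_lt_div_iff₀ hden1 hden2]
  have hid : (1 + A + B + C) ^ 2 * ((1 + A) * ((1 + u * B) * (1 + u * C))) -
      (1 + A + u * B + u * C) ^ 2 * ((1 + A) * ((1 + B) * (1 + C)))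
      = (1 + A) * ((u - 1) * (αe * u - γe)) := by
    rw [hαdef, hγdef]; ring
  have hQ : 0 < (1 + A) * ((u - 1) * (αe * u - γe)) :=
    mul_pos (by linarith) hP
  have h9 : 0 < (1 + A + B + C) ^ 2 * ((1 + A) * ((1 + u * B) * (1 + u * C))) -
      (1 + A + u * B + u * C) ^ 2 * ((1 + A) * ((1 + B) * (1 + C))) := by
    rw [hid]; exact hQ
  exact sub_pos.mp h9

private lemma acute2 {A B C : ℝ} (hB : 1 < B) (hC : 1 < C) (h : B * C ≤ A) :
    0 < C * A - B ∧ 0 < A * B - C := by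
  have hB0 : (0:ℝ) < B := by linarith
  have hC0 : (0:ℝ) < C := by linarith
  have hCC : 1 < C * C := by nlinarith
  have hBB : 1 < B * B := by nlinarith
  constructor
  · have t1 : C * (B * C) ≤ C * A := mul_le_mul_of_nonneg_left h hC0.le
    have t2 : B * 1 < B * (C * C) := mul_lt_mul_of_pos_left hCC hB0
    nlinarith [t1, t2]
  · have t1 : B * (B * C) ≤ B * A := mul_le_mul_of_nonneg_left h hB0.le
    have t2 : C * 1 < C * (B * B) := mul_lt_mul_of_pos_left hBB hC0
    nlinarith [t1, t2]

private lemma two_abc {A B C sb sc : ℝ} (hB : 1 < B) (hC : 1 < C)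
    (hsb2 : sb ^ 2 = B ^ 2 - 1) (hsc2 : sc ^ 2 = C ^ 2 - 1)
    (hlow : B * C - sb * sc < A) : B ^ 2 + C ^ 2 < 2 * A * B * C := by
  have hmul : 2 * (B * C) * (B * C - sb * sc) < 2 * (B * C) * A :=
    mul_lt_mul_of_pos_left hlow (by nlinarith)
  nlinarith [sq_nonneg (B * sc - C * sb)]

private lemma D_pos {A B C sb sc : ℝ}
    (hsb2 : sb ^ 2 = B ^ 2 - 1) (hsc2 : sc ^ 2 = C ^ 2 - 1)
    (hup : A < B * C + sb * sc) (hlow : B * C - sb * sc < A) :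
    0 < 1 + 2 * A * B * C - A ^ 2 - B ^ 2 - C ^ 2 := by
  nlinarith [mul_pos (show 0 < B * C + sb * sc - A by linarith)
    (show 0 < A - (B * C - sb * sc) by linarith)]

private lemma key (x y z : ℝ) (hx : 0 < x) (hy : 0 < y) (hz : 0 < z)
    (hD : 0 < 1 + 2 * Real.cosh x * Real.cosh y * Real.cosh z -
      Real.cosh x ^ 2 - Real.cosh y ^ 2 - Real.cosh z ^ 2) :
    (hypAngle x y z + hypAngle y z x + hypAngle z x y < Real.pi) ∧
    (0 ≤ hypAngle x y z + hypAngle y z x + hypAngle z x y) ∧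
    (Real.cos (hypAngle x y z + hypAngle y z x + hypAngle z x y) =
      1 - (1 + Real.cosh x + Real.cosh y + Real.cosh z) ^ 2 /
        ((1 + Real.cosh x) * ((1 + Real.cosh y) * (1 + Real.cosh z)))) := by
  set A := Real.cosh x with hAdef
  set B := Real.cosh y with hBdef
  set C := Real.cosh z with hCdef
  set sx := Real.sinh x with hsxdef
  set sy := Real.sinh y with hsydef
  set sz := Real.sinh z with hszdef
  have hA : 1 < A := Real.one_lt_cosh.mpr hx.ne'
  have hB : 1 < B := Real.one_lt_cosh.mpr hy.ne'
  have hC : 1 < C := Real.one_lt_cosh.mpr hz.ne'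
  have hsx : 0 < sx := Real.sinh_pos_iff.mpr hx
  have hsy : 0 < sy := Real.sinh_pos_iff.mpr hy
  have hsz : 0 < sz := Real.sinh_pos_iff.mpr hz
  have hsx2 : sx ^ 2 = A ^ 2 - 1 := Real.sinh_sq x
  have hsy2 : sy ^ 2 = B ^ 2 - 1 := Real.sinh_sq y
  have hsz2 : sz ^ 2 = C ^ 2 - 1 := Real.sinh_sq z
  set D := 1 + 2 * A * B * C - A ^ 2 - B ^ 2 - C ^ 2 with hDdef
  set sd := Real.sqrt D with hsddef
  have hsd2 : sd ^ 2 = D := Real.sq_sqrt hD.le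
  have hsd0 : 0 < sd := Real.sqrt_pos.mpr hD
  -- the three angles
  have e1 : hypAngle x y z = Real.arccos ((B * C - A) / (sy * sz)) := rfl
  have e2 : hypAngle y z x = Real.arccos ((C * A - B) / (sz * sx)) := rfl
  have e3 : hypAngle z x y = Real.arccos ((A * B - C) / (sx * sy)) := rfl
  have hq1 : (B * C - A) ^ 2 + sd ^ 2 = (sy * sz) ^ 2 := by
    rw [hsd2, mul_pow, hsy2, hsz2]; ring
  have hq2 : (C * A - B) ^ 2 + sd ^ 2 = (sz * sx) ^ 2 := by
    rw [hsd2, mul_pow, hsz2, hsx2]; ring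
  have hq3 : (A * B - C) ^ 2 + sd ^ 2 = (sx * sy) ^ 2 := by
    rw [hsd2, mul_pow, hsx2, hsy2]; ring
  obtain ⟨hc1, hs1, h01, hπ1⟩ := arccos_facts _ _ _ (mul_pos hsy hsz) hsd0 hq1
  obtain ⟨hc2, hs2, h02, hπ2⟩ := arccos_facts _ _ _ (mul_pos hsz hsx) hsd0 hq2
  obtain ⟨hc3, hs3, h03, hπ3⟩ := arccos_facts _ _ _ (mul_pos hsx hsy) hsd0 hq3
  rw [e1, e2, e3]
  set a1 := Real.arccos ((B * C - A) / (sy * sz)) with ha1def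
  set a2 := Real.arccos ((C * A - B) / (sz * sx)) with ha2def
  set a3 := Real.arccos ((A * B - C) / (sx * sy)) with ha3def
  -- sum < pi
  have hsum : a1 + a2 + a3 < Real.pi := by
    rcases le_or_gt (B * C) A with hBCA | hBCA
    · -- angle a1 possibly obtuse; a2, a3 acute
      obtain ⟨hn2, hn3⟩ := acute2 hB hC hBCA
      refine aux_sum_lt_pi h01.le hπ1.le h02.le hπ2.le h03.le hπ3.le ?_ ?_
      · rw [hc2, hc3]
        have : 0 < (C * A - B) / (sz * sx) := div_pos hn2 (mul_pos hsz hsx)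
        have : 0 < (A * B - C) / (sx * sy) := div_pos hn3 (mul_pos hsx hsy)
        linarith
      · rw [Real.cos_add, hc1, hc2, hc3, hs2, hs3,
          pair_identity A B C sx sy sz sd hsx2 hsd2 hsx.ne' hsy.ne' hsz.ne']
        exact div_pos (mul_pos (by linarith) hD) (mul_pos (pow_pos hsx 2) (mul_pos hsy hsz))
    · rcases le_or_gt (C * A) B with hCAB | hCAB
      · -- a2 possibly obtuse
        have hn3 : 0 < A * B - C := (acute2 hC hA hCAB).1
        have hsum' : a2 + a3 + a1 < Real.pi := by
          refine aux_sum_lt_pi h02.le hπ2.le h03.le hπ3.le h01.le hπ1.le ?_ ?_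
          · rw [hc3, hc1]
            have : 0 < (A * B - C) / (sx * sy) := div_pos hn3 (mul_pos hsx hsy)
            have : 0 < (B * C - A) / (sy * sz) :=
              div_pos (by linarith) (mul_pos hsy hsz)
            linarith
          · have hsd2' : sd ^ 2 = 1 + 2 * B * C * A - B ^ 2 - C ^ 2 - A ^ 2 := by
              rw [hsd2]; ring
            rw [Real.cos_add, hc2, hc3, hc1, hs3, hs1,
              pair_identity B C A sy sz sx sd hsy2 hsd2' hsy.ne' hsz.ne' hsx.ne']
            refine div_pos (mul_pos (by linarith) ?_)
              (mul_pos (pow_pos hsy 2) (mul_pos hsz hsx))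
            linarith [hD]
        linarith
      · -- a3 possibly obtuse
        have hsum' : a3 + a1 + a2 < Real.pi := by
          refine aux_sum_lt_pi h03.le hπ3.le h01.le hπ1.le h02.le hπ2.le ?_ ?_
          · rw [hc1, hc2]
            have : 0 < (B * C - A) / (sy * sz) :=
              div_pos (by linarith) (mul_pos hsy hsz)
            have : 0 < (C * A - B) / (sz * sx) :=
              div_pos (by linarith) (mul_pos hsz hsx)
            linarith
          · have hsd2' : sd ^ 2 = 1 + 2 * C * A * B - C ^ 2 - A ^ 2 - B ^ 2 := by
              rw [hsd2]; ring
            rw [Real.cos_add, hc3, hc1, hc2, hs1, hs2,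
              pair_identity C A B sz sx sy sd hsz2 hsd2' hsz.ne' hsx.ne' hsy.ne']
            refine div_pos (mul_pos (by linarith) ?_)
              (mul_pos (pow_pos hsz 2) (mul_pos hsx hsy))
            linarith [hD]
        linarith
  refine ⟨hsum, by linarith, ?_⟩
  have hre : a1 + a2 + a3 = a1 + (a2 + a3) := by ring
  rw [hre, Real.cos_add, Real.cos_add, Real.sin_add, hc1, hc2, hc3, hs1, hs2, hs3]
  exact cosS_identity A B C sx sy sz sd hsx2 hsy2 hsz2 hsd2 hA hB hC
    hsx.ne' hsy.ne' hsz.ne'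

/-- main theorem -/
theorem hyperbolic_deformed_area_increases (a b c t : ℝ)
    (ha : 0 < a) (hb : 0 < b) (hc : 0 < c)
    (h1 : a < b + c) (h2 : b < a + c) (h3 : c < a + b) (ht : 0 < t)
    (bt ct : ℝ) (hbt0 : 0 ≤ bt) (hct0 : 0 ≤ ct)
    (hbt : Real.cosh bt = Real.exp t * Real.cosh b)
    (hct : Real.cosh ct = Real.exp t * Real.cosh c) :
    hypAngle a bt ct + hypAngle bt ct a + hypAngle ct a bt <
      hypAngle a b c + hypAngle b c a + hypAngle c a b := by
  have hu : 1 < Real.exp t := by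
    rw [← Real.exp_zero]; exact Real.exp_lt_exp.mpr ht
  set u := Real.exp t with hudef
  set A := Real.cosh a with hAdef
  set B := Real.cosh b with hBdef
  set C := Real.cosh c with hCdef
  have hA : 1 < A := Real.one_lt_cosh.mpr ha.ne'
  have hB : 1 < B := Real.one_lt_cosh.mpr hb.ne'
  have hC : 1 < C := Real.one_lt_cosh.mpr hc.ne'
  have hsb : 0 < Real.sinh b := Real.sinh_pos_iff.mpr hb
  have hsc : 0 < Real.sinh c := Real.sinh_pos_iff.mpr hc
  -- positivity of bt, ct
  have hbt' : 0 < bt := by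
    rcases hbt0.lt_or_eq with h | h
    · exact h
    · exfalso
      have hub : (1:ℝ) * 1 < u * B := mul_lt_mul'' hu hB zero_le_one zero_le_one
      rw [← h, Real.cosh_zero] at hbt
      rw [one_mul] at hub
      linarith
  have hct' : 0 < ct := by
    rcases hct0.lt_or_eq with h | h
    · exact h
    · exfalso
      have hub : (1:ℝ) * 1 < u * C := mul_lt_mul'' hu hC zero_le_one zero_le_one
      rw [← h, Real.cosh_zero] at hct
      rw [one_mul] at hub
      linarith
  -- triangle inequality facts for original triangle
  have hup : A < B * C + Real.sinh b * Real.sinh c := by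
    have : Real.cosh a < Real.cosh (b + c) := by
      rw [Real.cosh_lt_cosh, abs_of_pos ha, abs_of_pos (by linarith : (0:ℝ) < b + c)]
      exact h1
    rwa [Real.cosh_add] at this
  have hlow : B * C - Real.sinh b * Real.sinh c < A := by
    have : Real.cosh (b - c) < Real.cosh a := by
      rw [Real.cosh_lt_cosh, abs_of_pos ha]
      rw [abs_lt]; constructor <;> linarith
    rwa [Real.cosh_sub] at this
  have hsb2 : Real.sinh b ^ 2 = B ^ 2 - 1 := by rw [hBdef]; exact Real.sinh_sq b
  have hsc2 : Real.sinh c ^ 2 = C ^ 2 - 1 := by rw [hCdef]; exact Real.sinh_sq c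
  have hD1 : 0 < 1 + 2 * A * B * C - A ^ 2 - B ^ 2 - C ^ 2 :=
    D_pos hsb2 hsc2 hup hlow
  have h2abc : B ^ 2 + C ^ 2 < 2 * A * B * C :=
    two_abc hB hC hsb2 hsc2 hlow
  have hD2 : 0 < 1 + 2 * Real.cosh a * Real.cosh bt * Real.cosh ct -
      Real.cosh a ^ 2 - Real.cosh bt ^ 2 - Real.cosh ct ^ 2 := by
    rw [hbt, hct]
    have hu2 : (1:ℝ) * 1 < u * u := mul_lt_mul'' hu hu zero_le_one zero_le_one
    have hfac : 0 < (u ^ 2 - 1) * (2 * A * B * C - B ^ 2 - C ^ 2) :=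
      mul_pos (by nlinarith [hu2]) (by linarith)
    have hid : 1 + 2 * A * (u * B) * (u * C) - A ^ 2 - (u * B) ^ 2 - (u * C) ^ 2 =
        (1 + 2 * A * B * C - A ^ 2 - B ^ 2 - C ^ 2) +
          (u ^ 2 - 1) * (2 * A * B * C - B ^ 2 - C ^ 2) := by ring
    rw [← hAdef]
    linarith [hid, hfac, hD1]
  obtain ⟨hlt1, hge1, hcos1⟩ := key a b c ha hb hc (by rw [← hAdef, ← hBdef, ← hCdef]; exact hD1)
  obtain ⟨hlt2, hge2, hcos2⟩ := key a bt ct ha hbt' hct' hD2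
  -- compare cosines
  have hcoslt : Real.cos (hypAngle a b c + hypAngle b c a + hypAngle c a b) <
      Real.cos (hypAngle a bt ct + hypAngle bt ct a + hypAngle ct a bt) := by
    rw [hcos1, hcos2, hbt, hct, ← hAdef, ← hBdef, ← hCdef]
    have := final_ineq A B C u hA hB hC hu h2abc
    linarith
  have hfin := Real.strictAntiOn_arccos
    (Set.mem_Icc.mpr ⟨Real.neg_one_le_cos _, Real.cos_le_one _⟩)
    (Set.mem_Icc.mpr ⟨Real.neg_one_le_cos _, Real.cos_le_one _⟩) hcoslt
  rwa [Real.arccos_cos hge2 hlt2.le, Real.arccos_cos hge1 hlt1.le] at hfin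
end
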